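/- In the finite-horizon MDP defined in the context, for every i ∈ {1,…,N} the function û*_i is non-increasing on the energy grid E: if ε⁻, ε⁺ ∈ E with ε⁻ ≤ ε⁺, then û*_i(ε⁺) ≤ û*_i(ε⁻). -/

import Mathlib

open MeasureTheory

/-- Composition with a measurable countable-range function is measurable. -/
lemma meas_comp_of_countable' {q : ℝ → ℝ} (hq : Measurable q)
    (hc : (Set.range q).Countable) (f : ℝ → ℝ) : Measurable fun x => f (q x) := by
  intro s _
  have heq : (fun x => f (q x)) ⁻¹' s
      = ⋃ v ∈ {v | v ∈ Set.range q ∧ f v ∈ s}, q ⁻¹' {v} := by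
    ext x
    simp only [Set.mem_preimage, Set.mem_iUnion, Set.mem_setOf_eq, Set.mem_singleton_iff]
    constructor
    · intro h
      exact ⟨q x, ⟨⟨x, rfl⟩, h⟩, rfl⟩
    · rintro ⟨v, ⟨_, hv⟩, hxv⟩
      rw [hxv]; exact hv
  rw [heq]
  exact MeasurableSet.biUnion (hc.mono fun v hv => hv.1)
    fun v _ => hq (measurableSet_singleton v)

/-- Lemma 3 of the paper: in the finite-horizon MDP of Section IV, for every block index
`i ∈ {1,…,N}` the aggregate optimal cost-to-go `û*_i` is non-increasing on the energy grid.
Here `ustar i` is the optimal cost-to-go `u*_i` (characterized by the terminal condition and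
Bellman's equations), and `uhat g ε = Σ_{γ_G,γ_H} g ε γ_G γ_H`. -/
theorem stmt10
    (N M K : ℕ) (hN : 1 ≤ N) (hM : 1 ≤ M) (hK : 1 ≤ K)
    (B τ wG wD CG CH pGmax pHmax : ℝ)
    (hB : 0 < B) (hτ : 0 < τ) (hwG : 0 < wG) (hwD : 0 < wD)
    (hCG : 0 < CG) (hCH : 0 < CH) (hpGmax : 0 < pGmax) (hpHmax : 0 < pHmax)
    (κ : ℝ) (hκ : κ = min pGmax (wD / (wG * τ)))
    (H : Fin K → ℝ) (hHpos : ∀ k, 0 < H k) (hHmono : StrictMono H)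
    (μ : Measure ℝ) [IsProbabilityMeasure μ] (hμ : μ (Set.Iio 0) = 0)
    (Quant : ℝ → ℝ)
    (hQuant : ∀ x, Quant x =
      ((2 * min (⌊(M : ℝ) * min x B / B⌋ + 1) (M : ℤ) - 1 : ℤ) : ℝ) * B / (2 * M))
    (Egrid : Set ℝ)
    (hEgrid : Egrid = {x : ℝ | ∃ m : ℕ, 1 ≤ m ∧ m ≤ M ∧ x = (2 * (m : ℝ) - 1) * B / (2 * M)})
    (ccost : ℝ → ℝ)
    (hccost : ∀ γ, ccost γ = if κ < CG / γ then wD else wG * τ * (CG / γ))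
    (uhat : (ℝ → ℝ → ℝ → ℝ) → ℝ → ℝ)
    (huhat : ∀ g ε, uhat g ε = ∑ kG : Fin K, ∑ kH : Fin K, g ε (H kG) (H kH))
    (ustar : ℕ → ℝ → ℝ → ℝ → ℝ)
    (hterm : ∀ ε γG γH, ustar N ε γG γH =
      if CH / γH ≤ min (ε / τ) pHmax then
        min ((1 - (0 : ℝ)) * ccost γG) ((1 - (1 : ℝ)) * ccost γG)
      else (1 - (0 : ℝ)) * ccost γG)
    (hbell : ∀ i, 1 ≤ i → i < N → ∀ ε γG γH, ustar i ε γG γH =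
      if CH / γH ≤ min (ε / τ) pHmax then
        min ((1 - (0 : ℝ)) * ccost γG + ((K : ℝ) ^ 2)⁻¹ *
              ∫ e, uhat (ustar (i + 1)) (Quant (ε - 0 * (CH / γH) * τ + e)) ∂μ)
            ((1 - (1 : ℝ)) * ccost γG + ((K : ℝ) ^ 2)⁻¹ *
              ∫ e, uhat (ustar (i + 1)) (Quant (ε - 1 * (CH / γH) * τ + e)) ∂μ)
      else (1 - (0 : ℝ)) * ccost γG + ((K : ℝ) ^ 2)⁻¹ *
              ∫ e, uhat (ustar (i + 1)) (Quant (ε - 0 * (CH / γH) * τ + e)) ∂μ) :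
    ∀ i, 1 ≤ i → i ≤ N → ∀ εm ∈ Egrid, ∀ εp ∈ Egrid, εm ≤ εp →
      uhat (ustar i) εp ≤ uhat (ustar i) εm := by
  have hKpos : (0:ℝ) < (K:ℝ) := by exact_mod_cast Nat.lt_of_lt_of_le Nat.zero_lt_one hK
  have hKinv : (0:ℝ) ≤ ((K:ℝ) ^ 2)⁻¹ := by positivity
  -- almost everywhere, harvested energy is nonnegative
  have hae : ∀ᵐ e ∂μ, (0:ℝ) ≤ e := by
    have hset : {e : ℝ | ¬ (0:ℝ) ≤ e} = Set.Iio 0 := by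
      ext e; simp [not_le]
    rw [ae_iff, hset]; exact hμ
  -- quantizer is monotone
  have hQmono : ∀ x y : ℝ, x ≤ y → Quant x ≤ Quant y := by
    intro x y hxy
    rw [hQuant, hQuant]
    have hfl : ⌊(M:ℝ) * min x B / B⌋ ≤ ⌊(M:ℝ) * min y B / B⌋ := by
      apply Int.floor_le_floor
      have hmm : min x B ≤ min y B := min_le_min hxy le_rfl
      gcongr
    have hmin : (2 * min (⌊(M:ℝ) * min x B / B⌋ + 1) (M:ℤ) - 1 : ℤ)
        ≤ 2 * min (⌊(M:ℝ) * min y B / B⌋ + 1) (M:ℤ) - 1 := by omega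
    have hcast : ((2 * min (⌊(M:ℝ) * min x B / B⌋ + 1) (M:ℤ) - 1 : ℤ) : ℝ)
        ≤ ((2 * min (⌊(M:ℝ) * min y B / B⌋ + 1) (M:ℤ) - 1 : ℤ) : ℝ) := by
      exact_mod_cast hmin
    have hMpos : (0:ℝ) < (M:ℝ) := by exact_mod_cast Nat.lt_of_lt_of_le Nat.zero_lt_one hM
    gcongr
  -- quantized values lie on the grid
  have hQmem : ∀ x : ℝ, 0 ≤ x → ∃ m : ℕ, 1 ≤ m ∧ m ≤ M ∧
      Quant x = (2 * (m : ℝ) - 1) * B / (2 * M) := by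
    intro x hx
    have h0 : (0:ℝ) ≤ min x B := le_min hx hB.le
    have hfl : (0:ℤ) ≤ ⌊(M:ℝ) * min x B / B⌋ :=
      Int.floor_nonneg.mpr (div_nonneg (mul_nonneg (Nat.cast_nonneg M) h0) hB.le)
    have hM1 : (1:ℤ) ≤ (M:ℤ) := by exact_mod_cast hM
    set k : ℤ := min (⌊(M:ℝ) * min x B / B⌋ + 1) (M:ℤ) with hk
    have hk1 : 1 ≤ k := le_min (by omega) hM1
    have hkM : k ≤ (M:ℤ) := min_le_right _ _
    refine ⟨k.toNat, by omega, by omega, ?_⟩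
    rw [hQuant, ← hk]
    have hkz : ((k.toNat : ℕ) : ℤ) = k := Int.toNat_of_nonneg (by omega)
    have hkk : ((k.toNat : ℕ) : ℝ) = ((k : ℤ) : ℝ) := by exact_mod_cast hkz
    rw [hkk]
    push_cast
    ring
  have hQmemE : ∀ x : ℝ, 0 ≤ x → Quant x ∈ Egrid := by
    intro x hx; rw [hEgrid]; exact hQmem x hx
  -- grid values are nonnegative
  have hEnn : ∀ x ∈ Egrid, (0:ℝ) ≤ x := by
    rw [hEgrid]
    rintro x ⟨m, hm1, hmM, rfl⟩
    have hm1' : (1:ℝ) ≤ (m:ℝ) := by exact_mod_cast hm1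
    have : (0:ℝ) ≤ 2 * (m:ℝ) - 1 := by linarith
    positivity
  -- measurability of the quantizer
  have hQeq : Quant = (fun k : ℤ => ((2 * min (k + 1) (M:ℤ) - 1 : ℤ) : ℝ) * B / (2 * M)) ∘
      (fun x : ℝ => ⌊(M:ℝ) * min x B / B⌋) := by
    funext x
    simp only [Function.comp_apply]
    exact hQuant x
  have hfloorMeas : Measurable fun x : ℝ => ⌊(M:ℝ) * min x B / B⌋ := by
    apply Measurable.floor
    exact ((continuous_const.mul (continuous_id.min continuous_const)).div_const B).measurable
  have hQMeas : Measurable Quant := by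
    rw [hQeq]; exact (measurable_of_countable _).comp hfloorMeas
  have hQcnt : (Set.range Quant).Countable := by
    rw [hQeq]
    exact Set.Countable.mono (Set.range_comp_subset_range _ _) (Set.countable_range _)
  -- integrability of composed cost functions
  have hint : ∀ (f : ℝ → ℝ) (c : ℝ), 0 ≤ c →
      Integrable (fun e => f (Quant (c + e))) μ := by
    intro f c hc
    have hmeas : Measurable fun e => f (Quant (c + e)) :=
      (meas_comp_of_countable' hQMeas hQcnt f).comp (measurable_const.add measurable_id)
    set C := ∑ m ∈ Finset.Icc 1 M, |f ((2 * (m:ℝ) - 1) * B / (2 * M))| with hC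
    apply Integrable.mono' (integrable_const C) hmeas.aestronglyMeasurable
    filter_upwards [hae] with e he
    obtain ⟨m, hm1, hmM, hmeq⟩ := hQmem (c + e) (by linarith)
    rw [hmeq, Real.norm_eq_abs]
    exact Finset.single_le_sum (f := fun m : ℕ => |f ((2 * (m:ℝ) - 1) * B / (2 * M))|)
      (fun i _ => abs_nonneg _) (by simp [Finset.mem_Icc]; omega)
  -- monotonicity of the expected cost-to-go
  have hJmono : ∀ (f : ℝ → ℝ), (∀ a ∈ Egrid, ∀ b ∈ Egrid, a ≤ b → f b ≤ f a) →
      ∀ c c' : ℝ, 0 ≤ c → c ≤ c' →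
      ∫ e, f (Quant (c' + e)) ∂μ ≤ ∫ e, f (Quant (c + e)) ∂μ := by
    intro f hf c c' hc hcc
    apply integral_mono_ae (hint f c' (by linarith)) (hint f c hc)
    filter_upwards [hae] with e he
    exact hf _ (hQmemE _ (by linarith)) _ (hQmemE _ (by linarith))
      (hQmono _ _ (by linarith))
  -- downward induction
  suffices key : ∀ d i, 1 ≤ i → i + d = N →
      ∀ εm ∈ Egrid, ∀ εp ∈ Egrid, εm ≤ εp →
        uhat (ustar i) εp ≤ uhat (ustar i) εm by
    intro i hi1 hiN
    exact key (N - i) i hi1 (by omega)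
  intro d
  induction d with
  | zero =>
    intro i hi1 hiN εm hεm εp hεp hle
    have hiN' : i = N := by omega
    subst hiN'
    rw [huhat, huhat]
    refine Finset.sum_le_sum fun kG _ => Finset.sum_le_sum fun kH _ => ?_
    rw [hterm, hterm]
    by_cases hm : CH / H kH ≤ min (εm / τ) pHmax
    · have hp2 : CH / H kH ≤ min (εp / τ) pHmax := by
        refine hm.trans (min_le_min ?_ le_rfl)
        gcongr
      rw [if_pos hm, if_pos hp2]
    · rw [if_neg hm]
      by_cases hp : CH / H kH ≤ min (εp / τ) pHmax
      · rw [if_pos hp]; exact min_le_left _ _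
      · rw [if_neg hp]
  | succ d ih =>
    intro i hi1 hiN εm hεm εp hεp hle
    have hiltN : i < N := by omega
    have IH := ih (i + 1) (by omega) (by omega)
    rw [huhat, huhat]
    refine Finset.sum_le_sum fun kG _ => Finset.sum_le_sum fun kH _ => ?_
    rw [hbell i hi1 hiltN, hbell i hi1 hiltN]
    simp only [zero_mul, sub_zero, one_mul, sub_self, zero_add]
    have hεm0 : 0 ≤ εm := hEnn εm hεm
    have hJ0 : ∫ e, uhat (ustar (i + 1)) (Quant (εp + e)) ∂μ
        ≤ ∫ e, uhat (ustar (i + 1)) (Quant (εm + e)) ∂μ :=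
      hJmono _ IH εm εp hεm0 hle
    by_cases hm : CH / H kH ≤ min (εm / τ) pHmax
    · have hp2 : CH / H kH ≤ min (εp / τ) pHmax := by
        refine hm.trans (min_le_min ?_ le_rfl)
        gcongr
      rw [if_pos hm, if_pos hp2]
      have hpm : CH / H kH * τ ≤ εm := by
        have h1 := hm.trans (min_le_left _ _)
        rw [le_div_iff₀ hτ] at h1
        exact h1
      have hJ1 : ∫ e, uhat (ustar (i + 1)) (Quant (εp - CH / H kH * τ + e)) ∂μ
          ≤ ∫ e, uhat (ustar (i + 1)) (Quant (εm - CH / H kH * τ + e)) ∂μ :=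
        hJmono _ IH _ _ (by linarith) (by linarith)
      exact min_le_min
        (add_le_add_right (mul_le_mul_of_nonneg_left hJ0 hKinv) _)
        (mul_le_mul_of_nonneg_left hJ1 hKinv)
    · rw [if_neg hm]
      by_cases hp : CH / H kH ≤ min (εp / τ) pHmax
      · rw [if_pos hp]
        exact (min_le_left _ _).trans
          (add_le_add_right (mul_le_mul_of_nonneg_left hJ0 hKinv) _)
      · rw [if_neg hp]
        exact add_le_add_right (mul_le_mul_of_nonneg_left hJ0 hKinv) _
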